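/- Let F be a field with char F ∉ {2,3} and let A be the Matsuo algebra of the affine plane of order 3 over F. If L and M are two distinct parallel lines of the affine plane, then the idempotents e_L and e_M are orthogonal: e_L e_M = 0. Equivalently, f_L f_M = f_L + f_M − 1. -/
import Mathlib


open Finset

/-- The Matsuo algebra `M_{1/2}(P3)` of the affine plane of order 3 over `F`: the free
`F`-module on the point set `P = (ℤ/3)²`, with the commutative bilinear multiplication
determined by `p_u p_u = p_u` and `p_u p_v = (1/4)(p_u + p_v − p_{−u−v})` for `u ≠ v`. -/
noncomputable def mMul (F : Type*) [Field F] (x y : ZMod 3 × ZMod 3 → F) :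
    ZMod 3 × ZMod 3 → F :=
  ∑ u : ZMod 3 × ZMod 3, ∑ v : ZMod 3 × ZMod 3,
    (x u * y v) •
      (if u = v then Pi.single u (1 : F)
       else (4⁻¹ : F) • (Pi.single u (1 : F) + Pi.single v (1 : F) -
         Pi.single (-u - v) (1 : F)) : ZMod 3 × ZMod 3 → F)

/-- The sum `Σ_{u ∈ s} p_u` in the Matsuo algebra. -/
noncomputable def pSum (F : Type*) [Field F] (s : Finset (ZMod 3 × ZMod 3)) :
    ZMod 3 × ZMod 3 → F :=
  ∑ u ∈ s, Pi.single u 1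

/-- The line of the affine plane of order 3 through `a` with direction `w`
(a coset of the 1-dimensional subspace spanned by `w`). -/
def lineThru (a w : ZMod 3 × ZMod 3) : Finset (ZMod 3 × ZMod 3) :=
  Finset.image (fun t : ZMod 3 => a + t • w) Finset.univ

noncomputable def B (F : Type*) [Field F] (u v : ZMod 3 × ZMod 3) : ZMod 3 × ZMod 3 → F :=
  if u = v then Pi.single u (1 : F)
  else (4⁻¹ : F) • (Pi.single u (1 : F) + Pi.single v (1 : F) - Pi.single (-u - v) (1 : F))

lemma mMul_def (F : Type*) [Field F] (x y : ZMod 3 × ZMod 3 → F) :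
    mMul F x y = ∑ u : ZMod 3 × ZMod 3, ∑ v : ZMod 3 × ZMod 3, (x u * y v) • B F u v := rfl

lemma B_comm (F : Type*) [Field F] (u v : ZMod 3 × ZMod 3) : B F u v = B F v u := by
  unfold B
  rcases eq_or_ne u v with rfl | h
  · simp
  · rw [if_neg h, if_neg (Ne.symm h)]
    have : -u - v = -v - u := by ring
    rw [this]
    ring_nf

lemma mMul_comm (F : Type*) [Field F] (x y : ZMod 3 × ZMod 3 → F) :
    mMul F x y = mMul F y x := by
  rw [mMul_def, mMul_def, Finset.sum_comm]
  congr 1; funext u; congr 1; funext v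
  rw [mul_comm, B_comm]

lemma mMul_sub_left (F : Type*) [Field F] (x x' y : ZMod 3 × ZMod 3 → F) :
    mMul F (x - x') y = mMul F x y - mMul F x' y := by
  simp only [mMul_def, ← Finset.sum_sub_distrib]
  congr 1; funext u; congr 1; funext v
  rw [Pi.sub_apply, sub_mul, sub_smul]

lemma mMul_sub_right (F : Type*) [Field F] (x y y' : ZMod 3 × ZMod 3 → F) :
    mMul F x (y - y') = mMul F x y - mMul F x y' := by
  rw [mMul_comm F x, mMul_sub_left, mMul_comm F y x, mMul_comm F y' x]

lemma mMul_smul_left (F : Type*) [Field F] (c : F) (x y : ZMod 3 × ZMod 3 → F) :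
    mMul F (c • x) y = c • mMul F x y := by
  simp only [mMul_def, Finset.smul_sum]
  congr 1; funext u; congr 1; funext v
  rw [Pi.smul_apply, smul_eq_mul, mul_assoc, mul_smul]

lemma mMul_smul_right (F : Type*) [Field F] (c : F) (x y : ZMod 3 × ZMod 3 → F) :
    mMul F x (c • y) = c • mMul F x y := by
  rw [mMul_comm F x, mMul_smul_left, mMul_comm F y x]

lemma pSum_apply (F : Type*) [Field F] (s : Finset (ZMod 3 × ZMod 3)) (u : ZMod 3 × ZMod 3) :
    pSum F s u = if u ∈ s then 1 else 0 := by
  unfold pSum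
  rw [Finset.sum_apply]
  simp [Pi.single_apply, eq_comm]

lemma mMul_pSum (F : Type*) [Field F] (s t : Finset (ZMod 3 × ZMod 3)) :
    mMul F (pSum F s) (pSum F t) = ∑ u ∈ s, ∑ v ∈ t, B F u v := by
  rw [mMul_def]
  have step : ∀ u : ZMod 3 × ZMod 3,
      ∑ v : ZMod 3 × ZMod 3, (pSum F s u * pSum F t v) • B F u v
        = (pSum F s u) • ∑ v ∈ t, B F u v := by
    intro u
    rw [Finset.smul_sum]
    refine ((Finset.sum_subset (Finset.subset_univ t) ?_)).symm.trans
      (Finset.sum_congr rfl ?_)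
    · intro v _ hv
      rw [pSum_apply F t, if_neg hv, mul_zero, zero_smul]
    · intro v hv
      rw [pSum_apply F t, if_pos hv, mul_one]
  simp only [step]
  refine ((Finset.sum_subset (Finset.subset_univ s) ?_)).symm.trans
    (Finset.sum_congr rfl ?_)
  · intro u _ hu
    rw [pSum_apply F s, if_neg hu, zero_smul]
  · intro u hu
    rw [pSum_apply F s, if_pos hu, one_smul]

lemma neg_sub_self' : ∀ v : ZMod 3 × ZMod 3, -v - v = v := by decide

lemma colU (F : Type*) [Field F] (h2 : (2 : F) ≠ 0) (v : ZMod 3 × ZMod 3) :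
    ∑ u : ZMod 3 × ZMod 3, B F u v = (3 : F) • (Pi.single v 1 : ZMod 3 × ZMod 3 → F) := by
  have h4 : (4 : F) ≠ 0 := by
    have : (4 : F) = 2 * 2 := by norm_num
    rw [this]; exact mul_ne_zero h2 h2
  have key : ∀ u : ZMod 3 × ZMod 3, B F u v =
      (4⁻¹ : F) • ((Pi.single u 1 : ZMod 3 × ZMod 3 → F) + Pi.single v 1 - Pi.single (-u - v) 1)
        + (if u = v then ((3 * 4⁻¹ : F)) • (Pi.single v 1 : ZMod 3 × ZMod 3 → F) else 0) := by
    intro u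
    rcases eq_or_ne u v with rfl | h
    · rw [B, if_pos rfl, if_pos rfl, neg_sub_self']
      have : (Pi.single u 1 : ZMod 3 × ZMod 3 → F) + Pi.single u 1 - Pi.single u 1 = Pi.single u 1 := by abel
      rw [this, ← add_smul]
      have : (4⁻¹ + 3 * 4⁻¹ : F) = 1 := by field_simp; ring
      rw [this, one_smul]
    · rw [B, if_neg h, if_neg h, add_zero]
  simp only [key]
  rw [Finset.sum_add_distrib]
  have h1 : ∑ u : ZMod 3 × ZMod 3,
      (4⁻¹ : F) • ((Pi.single u 1 : ZMod 3 × ZMod 3 → F) + Pi.single v 1 - Pi.single (-u - v) 1)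
      = (9 * 4⁻¹ : F) • (Pi.single v 1 : ZMod 3 × ZMod 3 → F) := by
    simp only [smul_sub, smul_add]
    rw [Finset.sum_sub_distrib, Finset.sum_add_distrib]
    have hinv : Function.Involutive (fun u : ZMod 3 × ZMod 3 => -u - v) := by
      intro u; ring
    have hre : ∑ u : ZMod 3 × ZMod 3, (4⁻¹ : F) • (Pi.single (-u - v) 1 : ZMod 3 × ZMod 3 → F)
        = ∑ u : ZMod 3 × ZMod 3, (4⁻¹ : F) • (Pi.single u 1 : ZMod 3 × ZMod 3 → F) :=
      Equiv.sum_comp hinv.toPerm (fun u => (4⁻¹ : F) • (Pi.single u 1 : ZMod 3 × ZMod 3 → F))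
    rw [hre]
    rw [Finset.sum_const, Finset.card_univ]
    have : (Fintype.card (ZMod 3 × ZMod 3)) = 9 := by decide
    rw [this]
    rw [← Nat.cast_smul_eq_nsmul F 9, smul_smul]
    push_cast
    abel
  rw [h1, Finset.sum_ite_eq' Finset.univ v, if_pos (Finset.mem_univ v), ← add_smul]
  congr 1
  field_simp
  ring

lemma mMul_univ_left (F : Type*) [Field F] (h2 : (2 : F) ≠ 0) (t : Finset (ZMod 3 × ZMod 3)) :
    mMul F (pSum F Finset.univ) (pSum F t) = (3 : F) • pSum F t := by
  rw [mMul_pSum, Finset.sum_comm]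
  calc ∑ v ∈ t, ∑ u : ZMod 3 × ZMod 3, B F u v
      = ∑ v ∈ t, (3 : F) • (Pi.single v 1 : ZMod 3 × ZMod 3 → F) :=
        Finset.sum_congr rfl (fun v _ => colU F h2 v)
    _ = (3 : F) • pSum F t := by rw [pSum, Finset.smul_sum]

lemma mMul_univ_right (F : Type*) [Field F] (h2 : (2 : F) ≠ 0) (s : Finset (ZMod 3 × ZMod 3)) :
    mMul F (pSum F s) (pSum F Finset.univ) = (3 : F) • pSum F s := by
  rw [mMul_comm, mMul_univ_left F h2]

lemma smul_inj : ∀ w : ZMod 3 × ZMod 3, w ≠ 0 → ∀ t t' : ZMod 3, t • w = t' • w → t = t' := by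
  decide

lemma mem_lineThru {a w x : ZMod 3 × ZMod 3} : x ∈ lineThru a w ↔ ∃ t : ZMod 3, a + t • w = x := by
  simp [lineThru]

lemma sum_lineThru (F : Type*) [Field F] (a w : ZMod 3 × ZMod 3) (hw : w ≠ 0)
    (f : ZMod 3 × ZMod 3 → (ZMod 3 × ZMod 3 → F)) :
    ∑ u ∈ lineThru a w, f u = ∑ t : ZMod 3, f (a + t • w) := by
  rw [lineThru, Finset.sum_image]
  intro t _ t' _ h
  exact smul_inj w hw t t' (by exact add_left_cancel h)

set_option maxHeartbeats 1000000 in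
lemma line_facts : ∀ a b w : ZMod 3 × ZMod 3, w ≠ 0 → b ∉ lineThru a w →
    Disjoint (lineThru a w) (lineThru b w) ∧
    Disjoint (lineThru a w ∪ lineThru b w) (lineThru (-a-b) w) ∧
    lineThru a w ∪ lineThru b w ∪ lineThru (-a-b) w = Finset.univ := by decide

set_option maxHeartbeats 1000000 in
lemma mem_of_ne : ∀ a b w : ZMod 3 × ZMod 3, lineThru a w ≠ lineThru b w → b ∉ lineThru a w := by
  decide

lemma pSum_partition (F : Type*) [Field F] (a b w : ZMod 3 × ZMod 3) (hw : w ≠ 0)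
    (hb : b ∉ lineThru a w) :
    pSum F Finset.univ = pSum F (lineThru a w) + pSum F (lineThru b w)
      + pSum F (lineThru (-a-b) w) := by
  obtain ⟨hd1, hd2, hcov⟩ := line_facts a b w hw hb
  rw [pSum, ← hcov, Finset.sum_union hd2, Finset.sum_union hd1]
  rfl

lemma line_prod (F : Type*) [Field F] (a b w : ZMod 3 × ZMod 3) (hw : w ≠ 0)
    (hb : b ∉ lineThru a w) :
    mMul F (pSum F (lineThru a w)) (pSum F (lineThru b w)) =
      ((3 : F) * 4⁻¹) • (pSum F (lineThru a w) + pSum F (lineThru b w)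
        - pSum F (lineThru (-a-b) w)) := by
  have hne : ∀ s t : ZMod 3, a + s • w ≠ b + t • w := by
    intro s t h
    apply hb
    rw [mem_lineThru]
    refine ⟨s - t, ?_⟩
    have h1 : a + (s - t) • w = (a + s • w) - t • w := by
      rw [sub_smul]; abel
    rw [h1, h, add_sub_cancel_right]
  have harg : ∀ s t : ZMod 3, -(a + s • w) - (b + t • w) = (-a - b) + (-s - t) • w := by
    intro s t
    rw [sub_smul, neg_smul]
    abel
  rw [mMul_pSum, sum_lineThru F a w hw]
  have inner : ∀ s : ZMod 3, ∑ v ∈ lineThru b w, B F (a + s • w) v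
      = ∑ t : ZMod 3, (4⁻¹ : F) • ((Pi.single (a + s • w) 1 : ZMod 3 × ZMod 3 → F)
          + Pi.single (b + t • w) 1 - Pi.single ((-a - b) + (-s - t) • w) 1) := by
    intro s
    rw [sum_lineThru F b w hw]
    refine Finset.sum_congr rfl fun t _ => ?_
    rw [B, if_neg (hne s t), harg]
  simp only [inner, smul_sub, smul_add]
  simp only [Finset.sum_sub_distrib, Finset.sum_add_distrib]
  have e1 : ∑ s : ZMod 3, ∑ _t : ZMod 3,
      (4⁻¹ : F) • (Pi.single (a + s • w) 1 : ZMod 3 × ZMod 3 → F)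
      = 3 • ∑ s : ZMod 3, (4⁻¹ : F) • (Pi.single (a + s • w) 1 : ZMod 3 × ZMod 3 → F) := by
    rw [← Finset.sum_nsmul]
    exact Finset.sum_congr rfl fun s _ => by
      rw [Finset.sum_const, Finset.card_univ]
      norm_num
  have e2 : ∑ _s : ZMod 3, ∑ t : ZMod 3,
      (4⁻¹ : F) • (Pi.single (b + t • w) 1 : ZMod 3 × ZMod 3 → F)
      = 3 • ∑ t : ZMod 3, (4⁻¹ : F) • (Pi.single (b + t • w) 1 : ZMod 3 × ZMod 3 → F) := by
    rw [Finset.sum_const, Finset.card_univ]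
    norm_num
  have e3 : ∑ s : ZMod 3, ∑ t : ZMod 3,
      (4⁻¹ : F) • (Pi.single ((-a - b) + (-s - t) • w) 1 : ZMod 3 × ZMod 3 → F)
      = 3 • ∑ t : ZMod 3, (4⁻¹ : F) • (Pi.single ((-a - b) + t • w) 1 : ZMod 3 × ZMod 3 → F) := by
    have hrow : ∀ s : ZMod 3, ∑ t : ZMod 3,
        (4⁻¹ : F) • (Pi.single ((-a - b) + (-s - t) • w) 1 : ZMod 3 × ZMod 3 → F)
        = ∑ t : ZMod 3, (4⁻¹ : F) • (Pi.single ((-a - b) + t • w) 1 : ZMod 3 × ZMod 3 → F) := by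
      intro s
      exact Equiv.sum_comp (Equiv.subLeft (-s))
        (fun r => (4⁻¹ : F) • (Pi.single ((-a - b) + r • w) 1 : ZMod 3 × ZMod 3 → F))
    simp only [hrow]
    rw [Finset.sum_const, Finset.card_univ]
    norm_num
  rw [e1, e2, e3]
  have f1 : ∀ c : ZMod 3 × ZMod 3, ∑ t : ZMod 3,
      (4⁻¹ : F) • (Pi.single (c + t • w) 1 : ZMod 3 × ZMod 3 → F)
      = (4⁻¹ : F) • pSum F (lineThru c w) := by
    intro c
    rw [← Finset.smul_sum, pSum, sum_lineThru F c w hw (fun u => Pi.single u 1)]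
  rw [f1 a, f1 b, f1 (-a-b)]
  match_scalars <;> push_cast <;> ring

/-- If `char F ∉ {2,3}` and `L`, `M` are two distinct parallel lines of the
affine plane of order 3, then `e_L e_M = 0`; equivalently `f_L f_M = f_L + f_M − 1`. -/
theorem stmt_7 (F : Type*) [Field F] (h2 : (2 : F) ≠ 0) (h3 : (3 : F) ≠ 0) :
    ∀ a b w : ZMod 3 × ZMod 3, w ≠ 0 → lineThru a w ≠ lineThru b w →
      (let one : ZMod 3 × ZMod 3 → F := (3⁻¹ : F) • pSum F Finset.univ
      let fL : ZMod 3 × ZMod 3 → F := (2 / 3 : F) • pSum F (lineThru a w)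
      let fM : ZMod 3 × ZMod 3 → F := (2 / 3 : F) • pSum F (lineThru b w)
      mMul F (one - fL) (one - fM) = 0 ∧ mMul F fL fM = fL + fM - one) := by
  intro a b w hw hlM
  have hb := mem_of_ne a b w hlM
  have h4 : (4 : F) ≠ 0 := by
    have : (4 : F) = 2 * 2 := by norm_num
    rw [this]; exact mul_ne_zero h2 h2
  dsimp only
  have hpart := pSum_partition F a b w hw hb
  constructor
  · rw [mMul_sub_left, mMul_sub_right, mMul_sub_right]
    simp only [mMul_smul_left, mMul_smul_right, mMul_univ_left F h2, mMul_univ_right F h2,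
      line_prod F a b w hw hb]
    rw [hpart]
    match_scalars <;> field_simp <;> ring
  · simp only [mMul_smul_left, mMul_smul_right, line_prod F a b w hw hb]
    rw [hpart]
    match_scalars <;> field_simp <;> ring
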